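/- Let G = (V,E) be a DAG, Λ ∈ ℝ^E, ω ∈ (0,∞)^V, and Σ = (I−Λ)^{-T} diag(ω) (I−Λ)^{-1}. Fix i ∈ V and let A be any subset of V with pa(i) ⊆ A ⊆ V \ de(i). Then ω_i = Σ_{ii} − Σ_{i,A} (Σ_{A,A})^{-1} Σ_{A,i}; i.e., the error variance of node i equals the conditional variance of X_i given X_A. -/

import Mathlib

open Matrix Relation Finset

section AuxSEM

variable {V : Type*} [Fintype V] [DecidableEq V]

/-- height of a node: number of strict descendants -/
noncomputable def htSEM (E : V → V → Prop) (x : V) : ℕ :=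
  Set.ncard {y | Relation.TransGen E x y}

theorem htSEM_lt (E : V → V → Prop) (hacyc : ∀ i, ¬ Relation.TransGen E i i)
    {m j : V} (h : E m j) : htSEM E j < htSEM E m := by
  apply Set.ncard_lt_ncard _ (Set.toFinite _)
  constructor
  · intro y hy; exact (TransGen.single h).trans hy
  · intro hsub
    exact hacyc j (hsub (TransGen.single h))

theorem htSEM_le (E : V → V → Prop) (x : V) : htSEM E x ≤ Fintype.card V := by
  have h := Set.ncard_le_ncard (Set.subset_univ {y | Relation.TransGen E x y})
    Set.finite_univ
  rwa [Set.ncard_univ, Nat.card_eq_fintype_card] at h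

theorem pow_apply_ne_zero_SEM (E : V → V → Prop) (Λ : Matrix V V ℝ)
    (hacyc : ∀ i, ¬ Relation.TransGen E i i)
    (hE : ∀ i j, Λ i j ≠ 0 → E i j) :
    ∀ (k : ℕ) (i j : V), (Λ ^ k) i j ≠ 0 →
      Relation.ReflTransGen E i j ∧ htSEM E j + k ≤ htSEM E i := by
  intro k
  induction k with
  | zero =>
    intro i j hij
    rw [pow_zero] at hij
    by_cases h : i = j
    · subst h; exact ⟨ReflTransGen.refl, by omega⟩
    · simp [Matrix.one_apply_ne h] at hij
  | succ k ih =>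
    intro i j hij
    rw [pow_succ, Matrix.mul_apply] at hij
    obtain ⟨m, -, hm⟩ := Finset.exists_ne_zero_of_sum_ne_zero hij
    have h1 : (Λ ^ k) i m ≠ 0 := fun h => hm (by simp [h])
    have h2 : Λ m j ≠ 0 := fun h => hm (by simp [h])
    obtain ⟨hr, hh⟩ := ih i m h1
    have hmj := hE m j h2
    exact ⟨hr.trans (ReflTransGen.single hmj), by
      have := htSEM_lt E hacyc hmj; omega⟩

theorem pow_card_succ_SEM (E : V → V → Prop) (Λ : Matrix V V ℝ)
    (hacyc : ∀ i, ¬ Relation.TransGen E i i)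
    (hE : ∀ i j, Λ i j ≠ 0 → E i j) :
    Λ ^ (Fintype.card V + 1) = 0 := by
  ext i j
  by_contra h
  obtain ⟨-, hh⟩ := pow_apply_ne_zero_SEM E Λ hacyc hE _ i j h
  have := htSEM_le E i
  omega

theorem one_sub_mul_geom_SEM (Λ : Matrix V V ℝ)
    (hnil : Λ ^ (Fintype.card V + 1) = 0) :
    (1 - Λ) * (∑ k ∈ Finset.range (Fintype.card V + 1), Λ ^ k) = 1 := by
  have h := mul_geom_sum Λ (Fintype.card V + 1)
  rw [hnil] at h
  have h2 : (1 - Λ) * (∑ k ∈ Finset.range (Fintype.card V + 1), Λ ^ k)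
      = -((Λ - 1) * ∑ k ∈ Finset.range (Fintype.card V + 1), Λ ^ k) := by
    rw [← neg_mul, neg_sub]
  rw [h2, h]; simp

theorem geom_mul_one_sub_SEM (Λ : Matrix V V ℝ)
    (hnil : Λ ^ (Fintype.card V + 1) = 0) :
    (∑ k ∈ Finset.range (Fintype.card V + 1), Λ ^ k) * (1 - Λ) = 1 := by
  have h := geom_sum_mul Λ (Fintype.card V + 1)
  rw [hnil] at h
  have h2 : (∑ k ∈ Finset.range (Fintype.card V + 1), Λ ^ k) * (1 - Λ)
      = -((∑ k ∈ Finset.range (Fintype.card V + 1), Λ ^ k) * (Λ - 1)) := by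
    rw [← mul_neg, neg_sub]
  rw [h2, h]; simp

/-- Positive-definiteness of a principal submatrix. -/
theorem posDef_submatrix_val_SEM {M : Matrix V V ℝ} (hM : M.PosDef) (A : Finset V) :
    (M.submatrix (Subtype.val : A → V) Subtype.val).PosDef := by
  classical
  refine posDef_iff_dotProduct_mulVec.mpr ⟨?_, ?_⟩
  · have h := hM.isHermitian
    rw [IsHermitian, conjTranspose_eq_transpose_of_trivial] at h ⊢
    ext a b
    simp only [transpose_apply, submatrix_apply]
    have h2 := congrFun (congrFun h (b : V)) (a : V)
    rw [transpose_apply] at h2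
    exact h2.symm
  · intro x hx
    set y : V → ℝ := fun v => if hv : v ∈ A then x ⟨v, hv⟩ else 0 with hy
    have hy0 : y ≠ 0 := by
      intro h0
      apply hx
      funext a
      have := congrFun h0 (a : V)
      simpa [hy, a.2] using this
    have key : star x ⬝ᵥ (M.submatrix (Subtype.val : A → V) Subtype.val).mulVec x
        = star y ⬝ᵥ M.mulVec y := by
      simp only [dotProduct, mulVec, dotProduct, star_trivial, Pi.star_apply, submatrix_apply]
      rw [show (∑ v, y v * ∑ w, M v w * y w)
          = ∑ v ∈ A, y v * ∑ w, M v w * y w from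
        (Finset.sum_subset (Finset.subset_univ A) (by
          intro v _ hv
          simp [hy, hv])).symm]
      rw [← Finset.sum_attach A fun v => y v * ∑ w, M v w * y w]
      apply Finset.sum_congr rfl
      intro a _
      have h1 : y (a : V) = x a := by simp [hy, a.2]
      rw [h1]
      congr 1
      rw [show (∑ w, M (a : V) w * y w) = ∑ w ∈ A, M (a : V) w * y w from
        (Finset.sum_subset (Finset.subset_univ A) (by
          intro w _ hw
          simp [hy, hw])).symm]
      rw [← Finset.sum_attach A fun w => M (a : V) w * y w]
      apply Finset.sum_congr rfl
      intro b _
      simp [hy, b.2]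
    rw [key]
    exact hM.dotProduct_mulVec_pos hy0

end AuxSEM

/-- The conditional variance `Σ_{ii} - Σ_{i,A} (Σ_{A,A})⁻¹ Σ_{A,i}` of variable `i`
given the variables in `A`. -/
noncomputable def condVar {V : Type*} [Fintype V] [DecidableEq V]
    (Cov : Matrix V V ℝ) (i : V) (A : Finset V) : ℝ :=
  Cov i i - ∑ a : A, ∑ b : A,
    Cov i a * (Cov.submatrix (Subtype.val : A → V) Subtype.val)⁻¹ a b * Cov b i

/-- in a linear Gaussian SEM given by a DAG `G`, for any node `i` and any
set `A` with `pa(i) ⊆ A ⊆ V \ de(i)`, the error variance `ω i` equals the conditional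
variance of `X_i` given `X_A`. -/
theorem stmt3 {V : Type*} [Fintype V] [DecidableEq V]
    (E : V → V → Prop) (hacyc : ∀ i, ¬ Relation.TransGen E i i)
    (Λ : Matrix V V ℝ) (hsupp : ∀ i j, ¬ E i j → Λ i j = 0)
    (ω : V → ℝ) (hω : ∀ k, 0 < ω k)
    (Cov : Matrix V V ℝ)
    (hCov : Cov = ((1 - Λ)ᵀ)⁻¹ * Matrix.diagonal ω * (1 - Λ)⁻¹)
    (i : V) (A : Finset V)
    (hpa : ∀ k, E k i → k ∈ A)
    (hde : ∀ j ∈ A, ¬ Relation.ReflTransGen E i j) :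
    ω i = condVar Cov i A := by
  classical
  have hE : ∀ a b, Λ a b ≠ 0 → E a b := fun a b h => by
    by_contra he; exact h (hsupp a b he)
  have hnil := pow_card_succ_SEM E Λ hacyc hE
  set S : Matrix V V ℝ := ∑ k ∈ Finset.range (Fintype.card V + 1), Λ ^ k with hS
  have hBS : (1 - Λ) * S = 1 := one_sub_mul_geom_SEM Λ hnil
  have hSB : S * (1 - Λ) = 1 := geom_mul_one_sub_SEM Λ hnil
  have hinv : (1 - Λ)⁻¹ = S := Matrix.inv_eq_right_inv hBS
  -- entries of S
  have hSii : S i i = 1 := by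
    rw [hS, Matrix.sum_apply]
    rw [Finset.sum_eq_single_of_mem 0 (Finset.mem_range.mpr (by omega))
      (fun k _ hk => by
        by_contra h
        obtain ⟨-, hh⟩ := pow_apply_ne_zero_SEM E Λ hacyc hE k i i h
        omega)]
    simp
  have hSiA : ∀ a ∈ A, S i a = 0 := by
    intro a ha
    rw [hS, Matrix.sum_apply]
    apply Finset.sum_eq_zero
    intro k _
    by_contra h
    exact hde a ha (pow_apply_ne_zero_SEM E Λ hacyc hE k i a h).1
  -- Cov = Sᵀ * D * S
  have hCov' : Cov = Sᵀ * Matrix.diagonal ω * S := by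
    rw [hCov, ← Matrix.transpose_nonsing_inv, hinv]
  -- key product identity
  have hkey : Cov * (1 - Λ) = Sᵀ * Matrix.diagonal ω := by
    rw [hCov', Matrix.mul_assoc (Sᵀ * Matrix.diagonal ω) S (1 - Λ), hSB, Matrix.mul_one]
  -- row identity
  have hrow : ∀ j : V, Cov j i - ∑ a ∈ A, Cov j a * Λ a i = S i j * ω i := by
    intro j
    have h1 : (Cov * (1 - Λ)) j i = (Sᵀ * Matrix.diagonal ω) j i := by rw [hkey]
    rw [Matrix.mul_diagonal, Matrix.transpose_apply, Matrix.mul_apply] at h1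
    have h3 : ∑ m, Cov j m * Λ m i = ∑ a ∈ A, Cov j a * Λ a i := by
      refine (Finset.sum_subset (Finset.subset_univ A) ?_).symm
      intro m _ hm
      have hz : Λ m i = 0 := by
        by_contra h; exact hm (hpa m (hE m i h))
      rw [hz, mul_zero]
    have h4 : ∑ m, Cov j m * (1 - Λ) m i
        = Cov j i - ∑ m, Cov j m * Λ m i := by
      simp only [Matrix.sub_apply, Matrix.one_apply, mul_sub, mul_ite, mul_one, mul_zero,
        Finset.sum_sub_distrib, Finset.sum_ite_eq']
      simp
    rw [h4, h3] at h1
    exact h1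
  -- specialize
  have key2 : Cov i i - ∑ a ∈ A, Cov i a * Λ a i = ω i := by
    have := hrow i
    rwa [hSii, one_mul] at this
  have key1 : ∀ a ∈ A, (∑ b ∈ A, Cov a b * Λ b i) = Cov a i := by
    intro a ha
    have := hrow a
    rw [hSiA a ha, zero_mul, sub_eq_zero] at this
    exact this.symm
  -- Cov is positive definite
  have hCovPD : Cov.PosDef := by
    rw [hCov']
    refine posDef_iff_dotProduct_mulVec.mpr ⟨?_, ?_⟩
    · rw [IsHermitian, conjTranspose_eq_transpose_of_trivial]
      rw [Matrix.transpose_mul, Matrix.transpose_mul, Matrix.transpose_transpose,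
        Matrix.diagonal_transpose, Matrix.mul_assoc]
    · intro x hx
      have hSx : S.mulVec x ≠ 0 := by
        intro h0
        apply hx
        have h1 : ((1 - Λ) * S).mulVec x = x := by rw [hBS, Matrix.one_mulVec]
        rw [← h1, ← Matrix.mulVec_mulVec, h0, Matrix.mulVec_zero]
      have hform : star x ⬝ᵥ (Sᵀ * Matrix.diagonal ω * S).mulVec x
          = ∑ k, ω k * (S.mulVec x k * S.mulVec x k) := by
        rw [star_trivial, ← Matrix.mulVec_mulVec, ← Matrix.mulVec_mulVec,
          Matrix.dotProduct_mulVec, Matrix.vecMul_transpose]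
        simp only [dotProduct, Matrix.mulVec_diagonal]
        exact Finset.sum_congr rfl fun k _ => by ring
      rw [hform]
      have hne : ∃ k, S.mulVec x k ≠ 0 := by
        by_contra h; push_neg at h; exact hSx (funext h)
      obtain ⟨k0, hk0⟩ := hne
      apply Finset.sum_pos'
      · intro k _
        exact mul_nonneg (hω k).le (mul_self_nonneg _)
      · exact ⟨k0, Finset.mem_univ _, mul_pos (hω k0) (mul_self_pos.mpr hk0)⟩
  -- the submatrix is invertible
  set sub : Matrix A A ℝ := Cov.submatrix (Subtype.val : A → V) Subtype.val with hsub
  have hsubPD : sub.PosDef := posDef_submatrix_val_SEM hCovPD A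
  have hsubdet : IsUnit sub.det := hsubPD.det_pos.ne'.isUnit
  -- the regression coefficients
  set c : A → ℝ := fun b => Λ (b : V) i with hcdef
  have hc : sub.mulVec c = fun a : A => Cov (a : V) i := by
    funext a
    show ∑ b : A, sub a b * c b = Cov (a : V) i
    rw [show (∑ b : A, sub a b * c b) = ∑ b : A, Cov (a : V) (b : V) * Λ (b : V) i from rfl]
    rw [Finset.sum_coe_sort A (fun v => Cov (a : V) v * Λ v i)]
    exact key1 a a.2
  have hcinv : sub⁻¹.mulVec (fun a : A => Cov (a : V) i) = c := by
    rw [← hc, Matrix.mulVec_mulVec, Matrix.nonsing_inv_mul _ hsubdet, Matrix.one_mulVec]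
  have hinner : ∀ a : A, (∑ b : A, Cov i (a : V) * sub⁻¹ a b * Cov (b : V) i)
      = Cov i (a : V) * Λ (a : V) i := by
    intro a
    have h5 : ∑ b : A, sub⁻¹ a b * Cov (b : V) i = Λ (a : V) i := by
      have h6 := congrFun hcinv a
      simpa [Matrix.mulVec, dotProduct, hcdef] using h6
    calc (∑ b : A, Cov i (a : V) * sub⁻¹ a b * Cov (b : V) i)
        = Cov i (a : V) * ∑ b : A, sub⁻¹ a b * Cov (b : V) i := by
          rw [Finset.mul_sum]; exact Finset.sum_congr rfl fun b _ => by ring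
      _ = Cov i (a : V) * Λ (a : V) i := by rw [h5]
  unfold condVar
  rw [Finset.sum_congr rfl (fun a _ => hinner a)]
  rw [Finset.sum_coe_sort A (fun v => Cov i v * Λ v i)]
  exact key2.symm
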